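/- Let H ≥ 5 and let p_1, …, p_H be Sophie Germain primes satisfying p_1 > 4H+1, p_{h+1} > 3·p_h·(2p_h+1)^3 for 1 ≤ h ≤ H−1, together with: for all h in [1,H] and all primes p in [5,H], gcd(2h + p_h, p) = 1 and gcd(2h + p_h(2p_h+1)^3, p) = 1; and for all h ≠ k in [1,H], gcd(p_h − 2(k−h), p_k(2p_k+1)) = 1 and gcd(p_h(2p_h+1)^3 − 2(k−h), p_k(2p_k+1)) = 1. Define n_h = 2p_h if h ≢ 2 (mod 3) and n_h = 2p_h(2p_h+1)^3 if h ≡ 2 (mod 3); let Π_H be the product of all primes p with 5 ≤ p ≤ H, let U = 12·Π_H·∏_{h=1}^H n_h^5, and let r be a positive integer with r ≡ 1 (mod 12Π_H) and r ≡ 1 − 4h (mod (n_h/2)^2) for every h in [1,H]. Then each polynomial F_h(t) = (Ut + r − 1 + 4h)/n_h + 1 is a linear polynomial with integer coefficients and positive leading coefficient, and the product F = ∏_{h=1}^H F_h has no fixed prime divisor: for every prime p there exists an integer t such that p does not divide F(t). -/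

import Mathlib

/-- Let `H ≥ 5` and let `p 1, …, p H` be Sophie Germain primes satisfying the conditions
of Proposition 1. With `n h = 2 * p h` or `2 * p h * (2 * p h + 1)^3` according to
`h % 3 ≠ 2` or `h % 3 = 2`, `Π_H` the product of the primes in `[5, H]`,
`U = 12 * Π_H * ∏_{h=1}^H (n h)^5`, and `r ≡ 1 (mod 12 Π_H)`,
`r ≡ 1 - 4h (mod (n h / 2)^2)` for `1 ≤ h ≤ H`, each
`F h (t) = (U*t + r - 1 + 4*h) / n h + 1` is a linear polynomial with integer
coefficients and positive leading coefficient, and the product `F = ∏ F h` has no fixed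
prime divisor. -/
theorem auxiliary_polynomial_no_fixed_prime_divisor
    (H : ℕ) (hH : 5 ≤ H) (p : ℕ → ℕ)
    (hgermain : ∀ h, 1 ≤ h → h ≤ H → (p h).Prime ∧ (2 * p h + 1).Prime)
    (hp1 : 4 * H + 1 < p 1)
    (hgrowth : ∀ h, 1 ≤ h → h ≤ H - 1 → 3 * p h * (2 * p h + 1) ^ 3 < p (h + 1))
    (hsmall : ∀ h, 1 ≤ h → h ≤ H → ∀ q : ℕ, q.Prime → 5 ≤ q → q ≤ H →
        Nat.gcd (2 * h + p h) q = 1 ∧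
        Nat.gcd (2 * h + p h * (2 * p h + 1) ^ 3) q = 1)
    (hcross : ∀ h k, 1 ≤ h → h ≤ H → 1 ≤ k → k ≤ H → h ≠ k →
        Int.gcd ((p h : ℤ) - 2 * ((k : ℤ) - (h : ℤ))) ((p k : ℤ) * (2 * (p k : ℤ) + 1)) = 1 ∧
        Int.gcd ((p h : ℤ) * (2 * (p h : ℤ) + 1) ^ 3 - 2 * ((k : ℤ) - (h : ℤ)))
          ((p k : ℤ) * (2 * (p k : ℤ) + 1)) = 1)
    (n : ℕ → ℕ)
    (hn : ∀ h, n h = if h % 3 = 2 then 2 * p h * (2 * p h + 1) ^ 3 else 2 * p h)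
    (Pi : ℕ) (hPi : Pi = ∏ q ∈ (Finset.Icc 5 H).filter Nat.Prime, q)
    (U : ℕ) (hU : U = 12 * Pi * ∏ h ∈ Finset.Icc 1 H, (n h) ^ 5)
    (r : ℕ) (hr : 0 < r)
    (hr1 : r ≡ 1 [MOD 12 * Pi])
    (hr2 : ∀ h, 1 ≤ h → h ≤ H →
        (r : ℤ) ≡ 1 - 4 * (h : ℤ) [ZMOD ((n h / 2 : ℕ) ^ 2 : ℕ)]) :
    -- each `F h` is linear with integer coefficients and positive leading coefficient
    (∀ h, 1 ≤ h → h ≤ H →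
        (n h : ℤ) ∣ (U : ℤ) ∧ (n h : ℤ) ∣ ((r : ℤ) - 1 + 4 * (h : ℤ)) ∧
        0 < (U : ℤ) / (n h : ℤ)) ∧
    -- the product `F` has no fixed prime divisor
    (∀ q : ℕ, q.Prime → ∃ t : ℤ,
        ¬ ((q : ℤ) ∣ ∏ h ∈ Finset.Icc 1 H,
            (((U : ℤ) * t + (r : ℤ) - 1 + 4 * (h : ℤ)) / (n h : ℤ) + 1))) := by
  classical
  -- the odd half of n
  set M : ℕ → ℕ := fun h => if h % 3 = 2 then p h * (2 * p h + 1) ^ 3 else p h with hM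
  have hnM : ∀ h, n h = 2 * M h := by
    intro h; rw [hn h]; simp only [hM]; split <;> ring
  -- basic facts about the primes
  have hpP : ∀ h, 1 ≤ h → h ≤ H → (p h).Prime := fun h h1 h2 => (hgermain h h1 h2).1
  have hqP : ∀ h, 1 ≤ h → h ≤ H → (2 * p h + 1).Prime := fun h h1 h2 => (hgermain h h1 h2).2
  have hple : ∀ k, k ≤ H → ∀ h, 1 ≤ h → h ≤ k → p h ≤ p k := by
    intro k
    induction k with
    | zero => intro _ h h1 h2; omega
    | succ k ih =>
      intro hkH h h1 h2
      rcases Nat.lt_or_ge h (k+1) with hlt | hge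
      · have hk1 : 1 ≤ k := by omega
        have h3 := hgrowth k hk1 (by omega)
        have hp2 : 2 ≤ p k := (hpP k hk1 (by omega)).two_le
        have hcube : 1 ≤ (2 * p k + 1) ^ 3 := Nat.one_le_pow _ _ (by omega)
        have : p k ≤ p (k+1) := by nlinarith
        exact le_trans (ih (by omega) h h1 (by omega)) this
      · have : h = k + 1 := by omega
        subst this; exact le_rfl
  have hpbig : ∀ h, 1 ≤ h → h ≤ H → 4 * H + 1 < p h := by
    intro h h1 h2
    have := hple h h2 1 le_rfl h1
    omega
  have hModd : ∀ h, 1 ≤ h → h ≤ H → M h % 2 = 1 := by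
    intro h h1 h2
    have hpo : p h % 2 = 1 := by
      rcases (hpP h h1 h2).eq_two_or_odd' with he | ho
      · have := hpbig h h1 h2; omega
      · exact Nat.odd_iff.mp ho
    have hq1 : (2 * p h + 1) % 2 = 1 := by omega
    have hq3 : ((2 * p h + 1) ^ 3) % 2 = 1 := by rw [Nat.pow_mod, hq1]
    simp only [hM]; split
    · rw [Nat.mul_mod, hq3, hpo]
    · exact hpo
  have hp3 : ∀ h, 1 ≤ h → h ≤ H → p h % 3 = 2 := by
    intro h h1 h2
    have hpb := hpbig h h1 h2
    have hnd : ¬ (3 ∣ p h) := by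
      intro hd
      have := (Nat.prime_dvd_prime_iff_eq (by norm_num) (hpP h h1 h2)).mp hd
      omega
    have h12 : p h % 3 = 1 ∨ p h % 3 = 2 := by omega
    rcases h12 with h12 | h12
    · exfalso
      have hd : 3 ∣ 2 * p h + 1 := by omega
      have := (Nat.prime_dvd_prime_iff_eq (by norm_num) (hqP h h1 h2)).mp hd
      omega
    · exact h12
  have hM3 : ∀ h, 1 ≤ h → h ≤ H → M h % 3 = if h % 3 = 2 then 1 else 2 := by
    intro h h1 h2
    have hp3' := hp3 h h1 h2
    have hq1 : (2 * p h + 1) % 3 = 2 := by omega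
    have hq3 : ((2 * p h + 1) ^ 3) % 3 = 2 := by rw [Nat.pow_mod, hq1]
    simp only [hM]; split
    · rw [Nat.mul_mod, hq3, hp3']
    · exact hp3'
  have hMpos : ∀ h, 1 ≤ h → h ≤ H → 0 < M h := by
    intro h h1 h2
    have := (hpP h h1 h2).two_le
    simp only [hM]; split <;> positivity
  have hnpos : ∀ h, 1 ≤ h → h ≤ H → 0 < n h := by
    intro h h1 h2; rw [hnM h]; have := hMpos h h1 h2; omega
  have hn2M : ∀ h, n h / 2 = M h := by intro h; rw [hnM h]; omega
  -- divisibility from the congruence conditions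
  have hr1' : ((12 * Pi : ℕ) : ℤ) ∣ (r : ℤ) - 1 := by
    have h2 := Nat.modEq_iff_dvd.mp hr1
    push_cast at h2 ⊢
    exact dvd_sub_comm.mp h2
  have h12 : (12 : ℤ) ∣ (r : ℤ) - 1 :=
    dvd_trans ⟨(Pi : ℤ), by push_cast; ring⟩ hr1'
  have hXdvd : ∀ h, 1 ≤ h → h ≤ H → (4 * (M h : ℤ) ^ 2) ∣ ((r : ℤ) - 1 + 4 * h) := by
    intro h h1 h2
    have hd := (hr2 h h1 h2).dvd
    rw [hn2M h] at hd
    have hm2 : ((M h : ℤ)) ^ 2 ∣ ((r : ℤ) - 1 + 4 * h) := by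
      have : (((M h ^ 2 : ℕ)) : ℤ) ∣ ((r : ℤ) - 1 + 4 * h) := by
        have : (((M h ^ 2 : ℕ)) : ℤ) ∣ _ := (dvd_neg).mpr hd
        convert this using 1 <;> push_cast <;> ring
      push_cast at this; exact this
    have h4 : (4 : ℤ) ∣ ((r : ℤ) - 1 + 4 * h) := by
      rcases h12 with ⟨c, hc⟩
      exact ⟨3 * c + h, by linarith⟩
    have hcop : IsCoprime (4 : ℤ) ((M h : ℤ) ^ 2) := by
      have h2' : Nat.Coprime 2 (M h) :=
        Nat.coprime_two_left.mpr (Nat.odd_iff.mpr (hModd h h1 h2))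
      have h4' : Nat.Coprime 4 (M h ^ 2) := by
        have : Nat.Coprime (2 ^ 2) (M h ^ 2) := h2'.pow 2 2
        simpa using this
      have := Nat.isCoprime_iff_coprime.mpr h4'
      push_cast at this; exact this
    exact hcop.mul_dvd h4 hm2
  -- the constant coefficient structure: c h = X h / n h + 1 = 2 * M h * s + 1
  have hcform : ∀ h, 1 ≤ h → h ≤ H →
      ∃ s : ℤ, ((r : ℤ) - 1 + 4 * h) / (n h : ℤ) + 1 = 2 * (M h : ℤ) * s + 1 := by
    intro h h1 h2
    obtain ⟨s, hs⟩ := hXdvd h h1 h2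
    refine ⟨s, ?_⟩
    have hM0 : (0 : ℤ) < (M h : ℤ) := by exact_mod_cast hMpos h h1 h2
    rw [hs, hnM h]
    push_cast
    rw [show (4 : ℤ) * (M h : ℤ) ^ 2 * s = (2 * (M h : ℤ)) * (2 * (M h : ℤ) * s) by ring,
      Int.mul_ediv_cancel_left _ (by positivity)]
  have hndvdX : ∀ h, 1 ≤ h → h ≤ H → (n h : ℤ) ∣ ((r : ℤ) - 1 + 4 * h) := by
    intro h h1 h2
    refine dvd_trans ?_ (hXdvd h h1 h2)
    rw [hnM h]; push_cast
    exact ⟨2 * (M h : ℤ), by ring⟩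
  have hnc : ∀ h, 1 ≤ h → h ≤ H →
      (n h : ℤ) * (((r : ℤ) - 1 + 4 * h) / (n h : ℤ) + 1) = ((r : ℤ) - 1 + 4 * h) + n h := by
    intro h h1 h2
    rw [mul_add, Int.mul_ediv_cancel' (hndvdX h h1 h2), mul_one]
  -- n h divides U
  have hndvdU : ∀ h, 1 ≤ h → h ≤ H → n h ∣ U := by
    intro h h1 h2
    rw [hU]
    have hmem : n h ^ 5 ∣ ∏ h ∈ Finset.Icc 1 H, n h ^ 5 :=
      Finset.dvd_prod_of_mem (fun h => n h ^ 5) (Finset.mem_Icc.mpr ⟨h1, h2⟩)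
    exact Dvd.dvd.mul_left (dvd_trans (dvd_pow_self (n h) (by norm_num)) hmem) _
  have hPipos : 0 < Pi := by
    rw [hPi]
    exact Finset.prod_pos fun q hq => (Finset.mem_filter.mp hq).2.pos
  have hUpos : 0 < U := by
    rw [hU]
    have : 0 < ∏ h ∈ Finset.Icc 1 H, (n h) ^ 5 := by
      refine Finset.prod_pos fun h hh => ?_
      rw [Finset.mem_Icc] at hh
      exact pow_pos (hnpos h hh.1 hh.2) 5
    positivity
  constructor
  · -- part 1
    intro h h1 h2
    refine ⟨Int.natCast_dvd_natCast.mpr (hndvdU h h1 h2), hndvdX h h1 h2, ?_⟩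
    exact Int.ediv_pos_of_pos_of_dvd (by exact_mod_cast hUpos)
      (by exact_mod_cast (hnpos h h1 h2).le) (Int.natCast_dvd_natCast.mpr (hndvdU h h1 h2))
  · -- part 2
    intro q hq
    have hqZ : Prime (q : ℤ) := Nat.prime_iff_prime_int.mp hq
    -- helper to show q does not divide the value at t = 0
    have key0 : (∀ h, 1 ≤ h → h ≤ H →
        ¬ ((q : ℤ) ∣ (((r : ℤ) - 1 + 4 * h) / (n h : ℤ) + 1))) →
        ∃ t : ℤ, ¬ ((q : ℤ) ∣ ∏ h ∈ Finset.Icc 1 H,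
          (((U : ℤ) * t + (r : ℤ) - 1 + 4 * (h : ℤ)) / (n h : ℤ) + 1)) := by
      intro hall
      refine ⟨0, fun hdvd => ?_⟩
      have heq : (∏ h ∈ Finset.Icc 1 H, (((U : ℤ) * 0 + (r : ℤ) - 1 + 4 * (h : ℤ)) / (n h : ℤ) + 1))
          = ∏ h ∈ Finset.Icc 1 H, (((r : ℤ) - 1 + 4 * (h : ℤ)) / (n h : ℤ) + 1) := by
        refine Finset.prod_congr rfl fun h hh => ?_
        rw [show (U : ℤ) * 0 + (r : ℤ) - 1 + 4 * (h : ℤ) = (r : ℤ) - 1 + 4 * (h : ℤ) by ring]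
      rw [heq] at hdvd
      obtain ⟨h, hmem, hdvh⟩ := hqZ.exists_mem_finset_dvd hdvd
      rw [Finset.mem_Icc] at hmem
      exact hall h hmem.1 hmem.2 hdvh
    by_cases hqH : q ≤ H
    · -- small primes: q ∈ {2, 3} ∪ [5, H]
      refine key0 fun h h1 h2 hdvh => ?_
      by_cases hq2 : q = 2
      · subst hq2
        obtain ⟨s, hs⟩ := hcform h h1 h2
        rw [hs, show (2:ℤ) * (M h : ℤ) * s = 2 * ((M h : ℤ) * s) by ring] at hdvh
        obtain ⟨c, hc⟩ := hdvh
        omega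
      · by_cases hq3 : q = 3
        · subst hq3
          have hd : (3 : ℤ) ∣ ((r : ℤ) - 1 + 4 * h) + n h := by
            rw [← hnc h h1 h2]
            exact Dvd.dvd.mul_left hdvh _
          have hd2 : (3 : ℤ) ∣ 4 * (h : ℤ) + (n h : ℤ) := by
            rcases h12 with ⟨c, hc⟩
            rcases hd with ⟨d, hdd⟩
            exact ⟨d - 4 * c, by linarith⟩
          have hd3 : (3 : ℕ) ∣ 4 * h + n h := by exact_mod_cast hd2
          have hM3' := hM3 h h1 h2
          have hnMh := hnM h
          by_cases hmod : h % 3 = 2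
          · rw [if_pos hmod] at hM3'; omega
          · rw [if_neg hmod] at hM3'; omega
        · -- 5 ≤ q ≤ H
          have hq5 : 5 ≤ q := by
            have h2le := hq.two_le
            have : q ≠ 4 := by rintro rfl; norm_num at hq
            omega
          have hqPi : q ∣ Pi := by
            rw [hPi]
            exact Finset.dvd_prod_of_mem _
              (Finset.mem_filter.mpr ⟨Finset.mem_Icc.mpr ⟨hq5, hqH⟩, hq⟩)
          have hqr : (q : ℤ) ∣ (r : ℤ) - 1 :=
            dvd_trans (Int.natCast_dvd_natCast.mpr (Dvd.dvd.mul_left hqPi 12)) hr1'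
          have hd : (q : ℤ) ∣ ((r : ℤ) - 1 + 4 * h) + n h := by
            rw [← hnc h h1 h2]
            exact Dvd.dvd.mul_left hdvh _
          have hd2 : (q : ℤ) ∣ 4 * (h : ℤ) + (n h : ℤ) := by
            have : (q : ℤ) ∣ _ := dvd_sub hd hqr
            convert this using 1; ring
          have hd3 : q ∣ 4 * h + n h := by exact_mod_cast hd2
          have hd4 : q ∣ 2 * (2 * h + M h) := by
            rw [hnM h] at hd3; convert hd3 using 1; ring
          have hcop2 : Nat.Coprime q 2 := by
            refine (Nat.coprime_primes hq (by norm_num)).mpr ?_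
            omega
          have hd5 : q ∣ 2 * h + M h := hcop2.dvd_of_dvd_mul_left hd4
          have hsm := hsmall h h1 h2 q hq hq5 hqH
          have hdg : q ∣ Nat.gcd (2 * h + M h) q := Nat.dvd_gcd hd5 dvd_rfl
          have hg1 : Nat.gcd (2 * h + M h) q = 1 := by
            simp only [hM]
            by_cases hmod : h % 3 = 2
            · rw [if_pos hmod]; exact hsm.2
            · rw [if_neg hmod]; exact hsm.1
          rw [hg1] at hdg
          have := Nat.le_of_dvd one_pos hdg
          omega
    · push_neg at hqH   -- H < q
      by_cases hqn : ∃ k, 1 ≤ k ∧ k ≤ H ∧ q ∣ n k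
      · obtain ⟨k, hk1, hk2, hkdvd⟩ := hqn
        have hq2 : ¬ ((q : ℤ) ∣ 2) := by
          intro hd
          have : (q : ℕ) ∣ 2 := by exact_mod_cast hd
          have := Nat.le_of_dvd (by norm_num) this
          omega
        have hqMk : (q : ℤ) ∣ (M k : ℤ) := by
          have : (q : ℤ) ∣ 2 * (M k : ℤ) := by
            have := Int.natCast_dvd_natCast.mpr hkdvd
            rw [hnM k] at this; push_cast at this; exact this
          rcases hqZ.dvd_mul.mp this with h' | h'
          · exact absurd h' hq2
          · exact h'
        refine key0 fun h h1 h2 hdvh => ?_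
        by_cases hhk : h = k
        · subst hhk
          obtain ⟨s, hs⟩ := hcform h h1 h2
          rw [hs] at hdvh
          have hdvd2' : (q : ℤ) ∣ 2 * (M h : ℤ) * s :=
            Dvd.dvd.mul_right (Dvd.dvd.mul_left hqMk 2) s
          have hone : (q : ℤ) ∣ 1 := by
            have := dvd_sub hdvh hdvd2'
            simpa using this
          have : (q : ℕ) ∣ 1 := by exact_mod_cast hone
          have := Nat.le_of_dvd one_pos this
          have := hq.two_le
          omega
        · -- h ≠ k
          have hqXk : (q : ℤ) ∣ ((r : ℤ) - 1 + 4 * k) :=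
            dvd_trans (dvd_trans hqMk ⟨4 * (M k : ℤ), by ring⟩) (hXdvd k hk1 hk2)
          have hd : (q : ℤ) ∣ ((r : ℤ) - 1 + 4 * h) + n h := by
            rw [← hnc h h1 h2]
            exact Dvd.dvd.mul_left hdvh _
          have hd2 : (q : ℤ) ∣ 2 * ((M h : ℤ) - 2 * ((k : ℤ) - (h : ℤ))) := by
            have : (q : ℤ) ∣ _ := dvd_sub hd hqXk
            rw [hnM h] at this; push_cast at this ⊢
            convert this using 1; ring
          have hd3 : (q : ℤ) ∣ (M h : ℤ) - 2 * ((k : ℤ) - (h : ℤ)) := by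
            rcases hqZ.dvd_mul.mp hd2 with h' | h'
            · exact absurd h' hq2
            · exact h'
          have hdpk : (q : ℤ) ∣ (p k : ℤ) * (2 * (p k : ℤ) + 1) := by
            revert hqMk
            simp only [hM]
            split
            · intro hqMk
              push_cast at hqMk
              rcases hqZ.dvd_mul.mp hqMk with h' | h'
              · exact Dvd.dvd.mul_right h' _
              · exact Dvd.dvd.mul_left (hqZ.dvd_of_dvd_pow h') _
            · intro hqMk
              exact Dvd.dvd.mul_right hqMk _
          have hcr := hcross h k h1 h2 hk1 hk2 hhk
          have hone : (q : ℤ) ∣ 1 := by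
            revert hd3
            simp only [hM]
            split
            · intro hd3
              have := Int.dvd_gcd (by push_cast at hd3 ⊢; exact hd3) hdpk
              rw [hcr.2] at this
              exact_mod_cast this
            · intro hd3
              have := Int.dvd_gcd hd3 hdpk
              rw [hcr.1] at this
              exact_mod_cast this
          have : (q : ℕ) ∣ 1 := by exact_mod_cast hone
          have := Nat.le_of_dvd one_pos this
          have := hq.two_le
          omega
      · -- q does not divide U: counting argument
        push_neg at hqn
        have hqU : ¬ (q ∣ U) := by
          intro hd
          rw [hU] at hd
          rcases (Nat.Prime.dvd_mul hq).mp hd with hd' | hd'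
          · rcases (Nat.Prime.dvd_mul hq).mp hd' with hd'' | hd''
            · have hq6 : 6 ≤ q := by omega
              have hq12 : q ≤ 12 := Nat.le_of_dvd (by norm_num) hd''
              interval_cases q <;> revert hq hd'' <;> decide
            · rw [hPi] at hd''
              obtain ⟨x, hx, hdx⟩ := hq.prime.exists_mem_finset_dvd hd''
              rw [Finset.mem_filter, Finset.mem_Icc] at hx
              have := (Nat.prime_dvd_prime_iff_eq hq hx.2).mp hdx
              omega
          · obtain ⟨x, hx, hdx⟩ := hq.prime.exists_mem_finset_dvd hd'
            rw [Finset.mem_Icc] at hx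
            exact hqn x hx.1 hx.2 (hq.dvd_of_dvd_pow hdx)
        haveI : Fact q.Prime := ⟨hq⟩
        set e : ℕ → ℤ := fun h => (U : ℤ) / (n h : ℤ) with he
        set c : ℕ → ℤ := fun h => ((r : ℤ) - 1 + 4 * h) / (n h : ℤ) + 1 with hcdef
        have heU : ∀ h, 1 ≤ h → h ≤ H → e h ∣ (U : ℤ) := by
          intro h h1 h2
          exact ⟨(n h : ℤ), (Int.ediv_mul_cancel
            (Int.natCast_dvd_natCast.mpr (hndvdU h h1 h2))).symm⟩
        have hene : ∀ h, 1 ≤ h → h ≤ H → ((e h : ℤ) : ZMod q) ≠ 0 := by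
          intro h h1 h2 h0
          have : (q : ℤ) ∣ e h := (ZMod.intCast_zmod_eq_zero_iff_dvd _ _).mp h0
          have : (q : ℤ) ∣ (U : ℤ) := dvd_trans this (heU h h1 h2)
          exact hqU (by exact_mod_cast this)
        set f : ℕ → ZMod q := fun h => -((c h : ℤ) : ZMod q) * (((e h : ℤ) : ZMod q))⁻¹ with hf
        set S : Finset (ZMod q) := (Finset.Icc 1 H).image f with hS
        have hcard : S.card ≤ H := le_trans Finset.card_image_le (by simp)
        have hexists : ∃ x : ZMod q, x ∉ S := by
          by_contra hall
          push_neg at hall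
          have hsub : (Finset.univ : Finset (ZMod q)) ⊆ S := fun x _ => hall x
          have := Finset.card_le_card hsub
          rw [Finset.card_univ, ZMod.card] at this
          omega
        obtain ⟨x, hx⟩ := hexists
        refine ⟨(x.val : ℤ), fun hdvd => ?_⟩
        have htx : (((x.val : ℤ)) : ZMod q) = x := by
          push_cast [ZMod.natCast_val, ZMod.cast_id]
          rfl
        -- rewrite the product
        have hprod : (∏ h ∈ Finset.Icc 1 H,
            (((U : ℤ) * (x.val : ℤ) + (r : ℤ) - 1 + 4 * (h : ℤ)) / (n h : ℤ) + 1)) =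
            ∏ h ∈ Finset.Icc 1 H, (e h * (x.val : ℤ) + c h) := by
          refine Finset.prod_congr rfl fun h hh => ?_
          rw [Finset.mem_Icc] at hh
          rw [show (U : ℤ) * (x.val : ℤ) + (r : ℤ) - 1 + 4 * (h : ℤ)
              = (U : ℤ) * (x.val : ℤ) + ((r : ℤ) - 1 + 4 * (h : ℤ)) by ring]
          rw [Int.add_ediv_of_dvd_left
            (Dvd.dvd.mul_right (Int.natCast_dvd_natCast.mpr (hndvdU h hh.1 hh.2)) _),
            Int.mul_ediv_assoc' _ (Int.natCast_dvd_natCast.mpr (hndvdU h hh.1 hh.2))]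
          simp only [he, hcdef]
          ring
        rw [hprod] at hdvd
        have hzero : ((∏ h ∈ Finset.Icc 1 H, (e h * (x.val : ℤ) + c h) : ℤ) : ZMod q) = 0 :=
          (ZMod.intCast_zmod_eq_zero_iff_dvd _ _).mpr hdvd
        rw [Int.cast_prod] at hzero
        rw [Finset.prod_eq_zero_iff] at hzero
        obtain ⟨h, hh, hz⟩ := hzero
        rw [Finset.mem_Icc] at hh
        have hz' : ((e h : ℤ) : ZMod q) * x + ((c h : ℤ) : ZMod q) = 0 := by
          rw [← htx]
          push_cast at hz ⊢
          linear_combination hz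
        have : x = f h := by
          rw [hf]
          rw [eq_mul_inv_iff_mul_eq₀ (hene h hh.1 hh.2)]
          linear_combination hz'
        exact hx (this ▸ Finset.mem_image_of_mem f (Finset.mem_Icc.mpr hh))
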